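/- For an antisymmetric Hamiltonian (eigenvalues satisfying ε_k + ε_{d+1-k} = ε_min + ε_max for all k), the minimum ergotropy over all density matrices of mean energy E equals max(0, 2(E - ε_mean)), where ε_mean = (ε_min + ε_max)/2. -/

import Mathlib

open Matrix
open scoped BigOperators ComplexOrder

noncomputable def energy {d : ℕ} (H ρ : Matrix (Fin d) (Fin d) ℂ) : ℝ :=
  (Matrix.trace (ρ * H)).re

noncomputable def ergotropy {d : ℕ} (H ρ : Matrix (Fin d) (Fin d) ℂ) : ℝ :=
  energy H ρ - ⨅ U : Matrix.unitaryGroup (Fin d) ℂ,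
    energy H ((U : Matrix (Fin d) (Fin d) ℂ) * ρ * star (U : Matrix (Fin d) (Fin d) ℂ))

noncomputable def antiErgotropy {d : ℕ} (H ρ : Matrix (Fin d) (Fin d) ℂ) : ℝ :=
  (⨆ U : Matrix.unitaryGroup (Fin d) ℂ,
    energy H ((U : Matrix (Fin d) (Fin d) ℂ) * ρ * star (U : Matrix (Fin d) (Fin d) ℂ))) - energy H ρ

noncomputable def minErg {d : ℕ} (H : Matrix (Fin d) (Fin d) ℂ) (E : ℝ) : ℝ :=
  sInf {x : ℝ | ∃ ρ : Matrix (Fin d) (Fin d) ℂ,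
    ρ.PosSemidef ∧ ρ.trace = 1 ∧ energy H ρ = E ∧ ergotropy H ρ = x}

section Helpers

variable {d : ℕ}

lemma energy_eq (eps : Fin d → ℝ) (ρ : Matrix (Fin d) (Fin d) ℂ) :
    energy (Matrix.diagonal fun i => (eps i : ℂ)) ρ = ∑ i, (ρ i i).re * eps i := by
  unfold energy
  rw [Matrix.trace, Complex.re_sum]
  congr 1; ext i
  simp [Matrix.diag, Matrix.mul_diagonal, Complex.mul_re]

lemma conj_diag_entry (U : Matrix (Fin d) (Fin d) ℂ) (q : Fin d → ℝ) (i : Fin d) :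
    ((U * Matrix.diagonal (fun j => (q j : ℂ)) * star U) i i).re
      = ∑ k, Complex.normSq (U i k) * q k := by
  rw [Matrix.star_eq_conjTranspose, Matrix.mul_apply, Complex.re_sum]
  congr 1; ext k
  rw [Matrix.mul_diagonal, Matrix.conjTranspose_apply]
  simp only [RCLike.star_def]
  have : U i k * (q k : ℂ) * (starRingEnd ℂ) (U i k)
      = (Complex.normSq (U i k) * q k : ℝ) := by
    push_cast
    rw [mul_comm (U i k) ((q k : ℂ)), mul_assoc, Complex.mul_conj]
    ring
  rw [this, Complex.ofReal_re]

lemma f_diag (eps q : Fin d → ℝ) (U : Matrix (Fin d) (Fin d) ℂ) :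
    energy (Matrix.diagonal fun i => (eps i : ℂ))
        (U * Matrix.diagonal (fun j => (q j : ℂ)) * star U)
      = ∑ k, q k * (∑ i, Complex.normSq (U i k) * eps i) := by
  rw [energy_eq]
  calc ∑ i, ((U * Matrix.diagonal (fun j => (q j : ℂ)) * star U) i i).re * eps i
      = ∑ i, (∑ k, Complex.normSq (U i k) * q k) * eps i := by
        refine Finset.sum_congr rfl fun i _ => ?_
        rw [conj_diag_entry]
    _ = ∑ i, ∑ k, q k * (Complex.normSq (U i k) * eps i) := by
        refine Finset.sum_congr rfl fun i _ => ?_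
        rw [Finset.sum_mul]
        exact Finset.sum_congr rfl fun k _ => by ring
    _ = ∑ k, ∑ i, q k * (Complex.normSq (U i k) * eps i) := Finset.sum_comm
    _ = ∑ k, q k * ∑ i, Complex.normSq (U i k) * eps i := by
        refine Finset.sum_congr rfl fun k _ => ?_
        rw [Finset.mul_sum]

lemma col_norm {U : Matrix (Fin d) (Fin d) ℂ} (h : star U * U = 1) (k : Fin d) :
    ∑ i, Complex.normSq (U i k) = 1 := by
  have := congrArg (fun M => (M k k).re) h
  simp only [Matrix.mul_apply, Matrix.one_apply_eq, Complex.one_re] at this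
  rw [← this, Complex.re_sum]
  congr 1; ext i
  simp only [Matrix.star_apply, RCLike.star_def]
  rw [show (starRingEnd ℂ) (U i k) * U i k = (Complex.normSq (U i k) : ℂ) from
    (Complex.normSq_eq_conj_mul_self).symm]
  rw [Complex.ofReal_re]

lemma row_norm {U : Matrix (Fin d) (Fin d) ℂ} (h : U * star U = 1) (i : Fin d) :
    ∑ k, Complex.normSq (U i k) = 1 := by
  have := congrArg (fun M => (M i i).re) h
  simp only [Matrix.mul_apply, Matrix.one_apply_eq, Complex.one_re] at this
  rw [← this, Complex.re_sum]
  congr 1; ext k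
  simp only [Matrix.star_apply, RCLike.star_def]
  rw [Complex.mul_conj, Complex.ofReal_re]

lemma psd_diag_re_nonneg {ρ : Matrix (Fin d) (Fin d) ℂ} (hρ : ρ.PosSemidef) (i : Fin d) :
    0 ≤ (ρ i i).re := by
  have h := hρ.diag_nonneg (i := i)
  rw [Complex.nonneg_iff] at h
  exact h.1

lemma trace_re_one {ρ : Matrix (Fin d) (Fin d) ℂ} (h : ρ.trace = 1) :
    ∑ i, (ρ i i).re = 1 := by
  have := congrArg Complex.re h
  rw [Matrix.trace, Complex.re_sum] at this
  simpa [Matrix.diag] using this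

lemma weighted_ge {p eps : Fin d → ℝ} {a : ℝ} (hp : ∀ i, 0 ≤ p i)
    (hsum : ∑ i, p i = 1) (h : ∀ i, a ≤ eps i) : a ≤ ∑ i, p i * eps i := by
  calc a = ∑ i, p i * a := by rw [← Finset.sum_mul, hsum, one_mul]
  _ ≤ ∑ i, p i * eps i := Finset.sum_le_sum fun i _ =>
      mul_le_mul_of_nonneg_left (h i) (hp i)

lemma perm_star (σ : Equiv.Perm (Fin d)) :
    star (σ.permMatrix ℂ) = Equiv.Perm.permMatrix ℂ σ.symm := by
  rw [Matrix.star_eq_conjTranspose]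
  have h : (σ.permMatrix ℂ)ᴴ = (σ.permMatrix ℂ)ᵀ := by
    ext i j
    simp [Matrix.conjTranspose_apply, PEquiv.toMatrix_apply, apply_ite (star : ℂ → ℂ)]
  rw [h, ← PEquiv.toMatrix_symm, ← Equiv.toPEquiv_symm]

lemma perm_unitary (σ : Equiv.Perm (Fin d)) :
    σ.permMatrix ℂ ∈ Matrix.unitaryGroup (Fin d) ℂ := by
  rw [Matrix.mem_unitaryGroup_iff', perm_star]
  show PEquiv.toMatrix (Equiv.toPEquiv σ.symm) * PEquiv.toMatrix (Equiv.toPEquiv σ) = 1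
  rw [← PEquiv.toMatrix_trans, ← Equiv.toPEquiv_trans]
  simp

lemma perm_conj_diag (σ : Equiv.Perm (Fin d)) (ρ : Matrix (Fin d) (Fin d) ℂ) (i : Fin d) :
    (σ.permMatrix ℂ * ρ * star (σ.permMatrix ℂ)) i i = ρ (σ i) (σ i) := by
  rw [perm_star, mul_assoc]
  rw [show (ρ * Equiv.Perm.permMatrix ℂ σ.symm) = ρ.submatrix id σ.symm.symm from
    PEquiv.mul_toMatrix_toPEquiv ρ σ.symm]
  rw [show σ.permMatrix ℂ * (ρ.submatrix id σ.symm.symm)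
      = (ρ.submatrix id σ.symm.symm).submatrix σ id from PEquiv.toMatrix_toPEquiv_mul σ _]
  simp

end Helpers

set_option maxHeartbeats 1600000 in
/-- For an antisymmetric Hamiltonian, the energy-constrained minimum ergotropy equals
max(0, 2(E - ε_mean)). -/
theorem minErg_antisymmetric {d : ℕ} [NeZero d] (eps : Fin d → ℝ)
    (hmono : Monotone eps)
    (hanti : ∀ k : Fin d, eps k + eps k.rev = (⨅ i, eps i) + (⨆ i, eps i))
    (E : ℝ) (hE : E ∈ Set.Icc (⨅ i, eps i) (⨆ i, eps i)) :
    minErg (Matrix.diagonal fun i => (eps i : ℂ)) E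
      = max 0 (2 * (E - ((⨅ i, eps i) + (⨆ i, eps i)) / 2)) := by
  have hd : 0 < d := Nat.pos_of_ne_zero (NeZero.ne d)
  have hdR : (d : ℝ) ≠ 0 := Nat.cast_ne_zero.mpr (NeZero.ne d)
  set a := ⨅ i, eps i with ha
  set b := ⨆ i, eps i with hb
  set H := (Matrix.diagonal fun i => (eps i : ℂ)) with hH
  have hbdd_below : BddBelow (Set.range eps) := (Set.finite_range eps).bddBelow
  have hbdd_above : BddAbove (Set.range eps) := (Set.finite_range eps).bddAbove
  have ha_le : ∀ i, a ≤ eps i := fun i => ciInf_le hbdd_below i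
  have hle_b : ∀ i, eps i ≤ b := fun i => le_ciSup hbdd_above i
  set i0 : Fin d := ⟨0, hd⟩ with hi0
  set iL : Fin d := ⟨d - 1, by omega⟩ with hiL
  have ha0 : a = eps i0 :=
    le_antisymm (ha_le i0) (le_ciInf fun i => hmono (show i0 ≤ i by rw [Fin.le_def]; simp [hi0]))
  have hb0 : b = eps iL :=
    le_antisymm (ciSup_le fun i => hmono (show i ≤ iL by rw [Fin.le_def]; simp [hiL]; omega)) (hle_b iL)
  have hrev : ∀ k : Fin d, eps k.rev = a + b - eps k := fun k => by
    have := hanti k; linarith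
  have hab : a ≤ b := le_trans (ha_le i0) (hle_b i0)
  set m : ℝ := (a + b) / 2 with hm
  have h2m : 2 * m = a + b := by rw [hm]; ring
  have ham : a ≤ m := by rw [hm]; linarith
  have hmb : m ≤ b := by rw [hm]; linarith
  have hEa : a ≤ E := hE.1
  have hEb : E ≤ b := hE.2
  -- sum of all eigenvalues
  have hsum_eps : ∑ i, eps i = d * m := by
    have h2 : ∑ i, eps (Fin.rev i) = ∑ i, eps i :=
      Fintype.sum_equiv Fin.revPerm _ _ (fun i => rfl)
    have h3 : 2 * ∑ i, eps i = ∑ _i : Fin d, (a + b) := by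
      rw [two_mul]
      nth_rewrite 2 [← h2]
      rw [← Finset.sum_add_distrib]
      exact Finset.sum_congr rfl fun k _ => hanti k
    rw [Finset.sum_const, Finset.card_univ, Fintype.card_fin, nsmul_eq_mul] at h3
    rw [hm]; linarith
  -- the permutation unitary that reverses the spectrum
  set P : Matrix (Fin d) (Fin d) ℂ := (Fin.revPerm : Equiv.Perm (Fin d)).permMatrix ℂ with hP
  set PU : Matrix.unitaryGroup (Fin d) ℂ := ⟨P, perm_unitary _⟩ with hPU
  -- conjugation by the reversal unitary flips the energy around the mean
  have hPE : ∀ ρ : Matrix (Fin d) (Fin d) ℂ, ρ.trace = 1 →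
      energy H (P * ρ * star P) = a + b - energy H ρ := by
    intro ρ htr
    rw [hH, energy_eq, energy_eq]
    calc ∑ i, ((P * ρ * star P) i i).re * eps i
        = ∑ i, (ρ (Fin.rev i) (Fin.rev i)).re * eps i := by
          refine Finset.sum_congr rfl fun i _ => ?_
          rw [hP, perm_conj_diag]
          rfl
      _ = ∑ j, (ρ j j).re * eps (Fin.rev j) := by
          refine Fintype.sum_equiv Fin.revPerm _ _ fun i => ?_
          simp [Fin.rev_rev]
      _ = ∑ j, ((a + b) * (ρ j j).re - (ρ j j).re * eps j) := by
          refine Finset.sum_congr rfl fun j _ => ?_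
          rw [hrev]; ring
      _ = (a + b) * ∑ j, (ρ j j).re - ∑ j, (ρ j j).re * eps j := by
          rw [Finset.sum_sub_distrib, Finset.mul_sum]
      _ = a + b - ∑ j, (ρ j j).re * eps j := by rw [trace_re_one htr, mul_one]
  -- lower bound on conjugated energies
  have hlow : ∀ ρ : Matrix (Fin d) (Fin d) ℂ, ρ.PosSemidef → ρ.trace = 1 →
      ∀ U : Matrix.unitaryGroup (Fin d) ℂ,
        a ≤ energy H ((U : Matrix (Fin d) (Fin d) ℂ) * ρ * star (U : Matrix (Fin d) (Fin d) ℂ)) := by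
    intro ρ hρ htr U
    have hpsd : ((U : Matrix (Fin d) (Fin d) ℂ) * ρ * star (U : Matrix (Fin d) (Fin d) ℂ)).PosSemidef := by
      rw [Matrix.star_eq_conjTranspose]
      exact hρ.mul_mul_conjTranspose_same _
    have htrσ : ((U : Matrix (Fin d) (Fin d) ℂ) * ρ * star (U : Matrix (Fin d) (Fin d) ℂ)).trace = 1 := by
      rw [Matrix.trace_mul_cycle]
      have h1 : star (U : Matrix (Fin d) (Fin d) ℂ) * (U : Matrix (Fin d) (Fin d) ℂ) = 1 := U.2.1
      rw [h1, one_mul, htr]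
    rw [hH, energy_eq]
    exact weighted_ge (psd_diag_re_nonneg hpsd) (trace_re_one htrσ) ha_le
  -- the set in question
  set S : Set ℝ := {x : ℝ | ∃ ρ : Matrix (Fin d) (Fin d) ℂ,
    ρ.PosSemidef ∧ ρ.trace = 1 ∧ energy H ρ = E ∧ ergotropy H ρ = x} with hS
  -- lower bound for all elements of S
  have hLB : ∀ x ∈ S, max 0 (2 * (E - m)) ≤ x := by
    rintro x ⟨ρ, hρ, htr, hen, rfl⟩
    have hbddf : BddBelow (Set.range fun U : Matrix.unitaryGroup (Fin d) ℂ =>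
        energy H ((U : Matrix (Fin d) (Fin d) ℂ) * ρ * star (U : Matrix (Fin d) (Fin d) ℂ))) := by
      refine ⟨a, ?_⟩
      rintro y ⟨U, rfl⟩
      exact hlow ρ hρ htr U
    have h1 : (⨅ U : Matrix.unitaryGroup (Fin d) ℂ,
        energy H ((U : Matrix (Fin d) (Fin d) ℂ) * ρ * star (U : Matrix (Fin d) (Fin d) ℂ))) ≤ E := by
      have := ciInf_le hbddf (1 : Matrix.unitaryGroup (Fin d) ℂ)
      simpa [hen] using this
    have h2 : (⨅ U : Matrix.unitaryGroup (Fin d) ℂ,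
        energy H ((U : Matrix (Fin d) (Fin d) ℂ) * ρ * star (U : Matrix (Fin d) (Fin d) ℂ))) ≤ a + b - E := by
      have := ciInf_le hbddf PU
      rw [show ((PU : Matrix.unitaryGroup (Fin d) ℂ) : Matrix (Fin d) (Fin d) ℂ) = P from rfl] at this
      rw [hPE ρ htr, hen] at this
      exact this
    rw [max_le_iff]
    constructor
    · rw [ergotropy, hen]; linarith
    · rw [ergotropy, hen]; have := h2m; linarith
  -- construction of diagonal states
  have constr : ∀ (j0 : Fin d) (t : ℝ), 0 ≤ t → t ≤ 1 →
      ∃ ρ : Matrix (Fin d) (Fin d) ℂ, ρ.PosSemidef ∧ ρ.trace = 1 ∧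
        energy H ρ = t * m + (1 - t) * eps j0 ∧
        ∀ U : Matrix.unitaryGroup (Fin d) ℂ,
          t * m + (1 - t) * a ≤
            energy H ((U : Matrix (Fin d) (Fin d) ℂ) * ρ * star (U : Matrix (Fin d) (Fin d) ℂ)) := by
    intro j0 t ht0 ht1
    set q : Fin d → ℝ := fun k => t / d + if k = j0 then 1 - t else 0 with hq
    have hq0 : ∀ k, 0 ≤ q k := by
      intro k
      rw [hq]
      dsimp only
      have h1 : 0 ≤ t / (d : ℝ) := div_nonneg ht0 (Nat.cast_nonneg d)
      split <;> linarith
    have hqsum : ∑ k, q k = 1 := by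
      rw [hq]
      rw [Finset.sum_add_distrib, Finset.sum_const, Finset.card_univ, Fintype.card_fin,
        nsmul_eq_mul, Finset.sum_ite_eq' Finset.univ j0 (fun _ => 1 - t)]
      simp only [Finset.mem_univ, if_true]
      field_simp
      ring
    have hqe : ∀ v : Fin d → ℝ, ∑ k, q k * v k = (t / d) * (∑ k, v k) + (1 - t) * v j0 := by
      intro v
      rw [hq]
      simp only [add_mul, ite_mul, zero_mul]
      rw [Finset.sum_add_distrib, Finset.sum_ite_eq' Finset.univ j0 (fun k => (1 - t) * v k)]
      simp only [Finset.mem_univ, if_true, Finset.mul_sum]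
    refine ⟨Matrix.diagonal fun k => (q k : ℂ), ?_, ?_, ?_, ?_⟩
    · refine Matrix.PosSemidef.diagonal fun k => ?_
      show (0 : ℂ) ≤ (q k : ℂ)
      rw [Complex.nonneg_iff]
      exact ⟨by simpa using hq0 k, by simp⟩
    · rw [Matrix.trace_diagonal]
      rw [show ∑ i, ((q i : ℂ)) = ((∑ i, q i : ℝ) : ℂ) by push_cast; ring]
      rw [hqsum]; norm_num
    · rw [hH, energy_eq]
      have : ∀ i : Fin d, ((Matrix.diagonal fun k => (q k : ℂ)) i i).re * eps i = q i * eps i := by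
        intro i
        rw [Matrix.diagonal_apply_eq, Complex.ofReal_re]
      rw [Finset.sum_congr rfl fun i _ => this i, hqe eps, hsum_eps]
      field_simp
    · intro U
      rw [hH, f_diag eps q]
      rw [hqe fun k => ∑ i, Complex.normSq ((U : Matrix (Fin d) (Fin d) ℂ) i k) * eps i]
      have hcol : ∀ k, a ≤ ∑ i, Complex.normSq ((U : Matrix (Fin d) (Fin d) ℂ) i k) * eps i := by
        intro k
        have h1 : star (U : Matrix (Fin d) (Fin d) ℂ) * (U : Matrix (Fin d) (Fin d) ℂ) = 1 := U.2.1
        exact weighted_ge (fun i => Complex.normSq_nonneg _) (col_norm h1 k) ha_le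
      have hrow : ∑ k, ∑ i, Complex.normSq ((U : Matrix (Fin d) (Fin d) ℂ) i k) * eps i = d * m := by
        have h2 : (U : Matrix (Fin d) (Fin d) ℂ) * star (U : Matrix (Fin d) (Fin d) ℂ) = 1 := U.2.2
        rw [Finset.sum_comm]
        calc ∑ i, ∑ k, Complex.normSq ((U : Matrix (Fin d) (Fin d) ℂ) i k) * eps i
            = ∑ i : Fin d, (∑ k, Complex.normSq ((U : Matrix (Fin d) (Fin d) ℂ) i k)) * eps i := by
              refine Finset.sum_congr rfl fun i _ => ?_
              rw [Finset.sum_mul]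
          _ = ∑ i, eps i := by
              refine Finset.sum_congr rfl fun i _ => ?_
              rw [row_norm h2 i, one_mul]
          _ = d * m := hsum_eps
      rw [hrow]
      have h3 : (t / d) * ((d : ℝ) * m) = t * m := by field_simp
      rw [h3]
      have h4 : 0 ≤ 1 - t := by linarith
      nlinarith [hcol j0]
  -- goal: sInf S = max 0 (2 * (E - m))
  have hgoal : minErg H E = sInf S := rfl
  rw [hgoal]
  have hmaxval : ∃ x ∈ S, x = max 0 (2 * (E - m)) := by
    rcases le_total E m with hcase | hcase
    · -- passive case
      set t : ℝ := (E - a) / (m - a) with ht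
      have ht0 : 0 ≤ t := div_nonneg (by linarith) (by linarith)
      have ht1 : t ≤ 1 := div_le_one_of_le₀ (by linarith) (by linarith)
      have hEt : t * m + (1 - t) * a = E := by
        rcases eq_or_lt_of_le ham with h | h
        · have hEa' : E = a := le_antisymm (le_of_le_of_eq hcase h.symm) hEa
          have htz : t = 0 := by
            rw [ht, show E - a = 0 by linarith, zero_div]
          rw [htz]; ring_nf; linarith
        · have h5 : t * (m - a) = E - a := div_mul_cancel₀ _ (ne_of_gt (sub_pos.2 h))
          nlinarith [h5]
      obtain ⟨ρ, hρ, htr, hen, hlo⟩ := constr i0 t ht0 ht1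
      have henE : energy H ρ = E := by rw [hen, ← ha0]; exact hEt
      refine ⟨0, ⟨ρ, hρ, htr, henE, ?_⟩, ?_⟩
      · -- ergotropy is zero
        rw [ergotropy, henE]
        have hinf : (⨅ U : Matrix.unitaryGroup (Fin d) ℂ,
            energy H ((U : Matrix (Fin d) (Fin d) ℂ) * ρ * star (U : Matrix (Fin d) (Fin d) ℂ))) = E := by
          refine le_antisymm ?_ ?_
          · have hbddf : BddBelow (Set.range fun U : Matrix.unitaryGroup (Fin d) ℂ =>
                energy H ((U : Matrix (Fin d) (Fin d) ℂ) * ρ * star (U : Matrix (Fin d) (Fin d) ℂ))) :=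
              ⟨a, by rintro y ⟨U, rfl⟩; exact hlow ρ hρ htr U⟩
            have := ciInf_le hbddf (1 : Matrix.unitaryGroup (Fin d) ℂ)
            simpa [henE] using this
          · refine le_ciInf fun U => ?_
            linarith [hlo U, hEt]
        rw [hinf]; ring
      · rw [max_eq_left]; linarith
    · -- active case
      set t : ℝ := (b - E) / (b - m) with ht
      have ht0 : 0 ≤ t := div_nonneg (by linarith) (by linarith)
      have ht1 : t ≤ 1 := div_le_one_of_le₀ (by linarith) (by linarith)
      have hEt : t * m + (1 - t) * b = E := by
        rcases eq_or_lt_of_le hmb with h | h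
        · have hEb' : E = b := le_antisymm hEb (le_of_eq_of_le h.symm hcase)
          have htz : t = 0 := by
            rw [ht, show b - E = 0 by linarith, zero_div]
          rw [htz]; ring_nf; linarith
        · have h5 : t * (b - m) = b - E := div_mul_cancel₀ _ (ne_of_gt (sub_pos.2 h))
          nlinarith [h5]
      obtain ⟨ρ, hρ, htr, hen, hlo⟩ := constr iL t ht0 ht1
      have henE : energy H ρ = E := by rw [hen, ← hb0]; exact hEt
      have hLba : t * m + (1 - t) * a = a + b - E := by
        linear_combination (-1 : ℝ) * hEt + t * h2m
      refine ⟨2 * (E - m), ⟨ρ, hρ, htr, henE, ?_⟩, ?_⟩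
      · rw [ergotropy, henE]
        have hinf : (⨅ U : Matrix.unitaryGroup (Fin d) ℂ,
            energy H ((U : Matrix (Fin d) (Fin d) ℂ) * ρ * star (U : Matrix (Fin d) (Fin d) ℂ))) = a + b - E := by
          refine le_antisymm ?_ ?_
          · have hbddf : BddBelow (Set.range fun U : Matrix.unitaryGroup (Fin d) ℂ =>
                energy H ((U : Matrix (Fin d) (Fin d) ℂ) * ρ * star (U : Matrix (Fin d) (Fin d) ℂ))) :=
              ⟨a, by rintro y ⟨U, rfl⟩; exact hlow ρ hρ htr U⟩
            have := ciInf_le hbddf PU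
            rw [show ((PU : Matrix.unitaryGroup (Fin d) ℂ) : Matrix (Fin d) (Fin d) ℂ) = P from rfl] at this
            rw [hPE ρ htr, henE] at this
            exact this
          · refine le_ciInf fun U => ?_
            have := hlo U
            linarith [hLba]
        rw [hinf]
        linarith [h2m]
      · rw [max_eq_right]; linarith
  obtain ⟨x, hxS, hxval⟩ := hmaxval
  refine le_antisymm ?_ ?_
  · calc sInf S ≤ x := csInf_le ⟨max 0 (2 * (E - m)), fun y hy => hLB y hy⟩ hxS
      _ = _ := hxval
  · exact le_csInf ⟨x, hxS⟩ hLB
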